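/- Let u be a nonprincipal ultrafilter on ℕ, let (X_n, B_n, μ_n) be a sequence of probability spaces, and let (X_u, B_u, μ_u) be the Loeb measure space. Then: (1) for every sequence {A_n ∈ B_n}_n, the set [A_n]_u belongs to B_u and μ_u([A_n]_u) = lim_u μ_n(A_n); (2) for every A ∈ B_u there is a sequence {B_n ∈ B_n}_n such that μ_u(A Δ [B_n]_u) = 0. -/

import Mathlib

open MeasureTheory Filter Topology
open scoped ENNReal symmDiff



/-! Ultraproducts of sets and the Loeb outer measure. -/

/-- The equivalence relation on `∀ n, X n` identifying sequences that agree
`u`-almost everywhere. -/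
def uRel (u : Ultrafilter ℕ) {X : ℕ → Type*} (x y : ∀ n, X n) : Prop :=
  ∀ᶠ n in (u : Filter ℕ), x n = y n

/-- The (set-theoretic) ultraproduct of the family `X n` with respect to the
ultrafilter `u`: the quotient of `∀ n, X n` by the relation identifying sequences
which agree `u`-almost everywhere. -/
def UProd (u : Ultrafilter ℕ) (X : ℕ → Type*) : Type _ :=
  Quot (uRel u (X := X))

/-- The class `[x_n]_u` of a sequence in the ultraproduct. -/
def uMk (u : Ultrafilter ℕ) {X : ℕ → Type*} (x : ∀ n, X n) : UProd u X :=
  Quot.mk _ x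

/-- The subset `[A_n]_u` of the ultraproduct determined by a sequence of subsets
`A n ⊆ X n`: the set of classes of sequences which belong to `A n` for `u`-almost
every `n`. -/
def uSet (u : Ultrafilter ℕ) {X : ℕ → Type*} (A : ∀ n, Set (X n)) : Set (UProd u X) :=
  {z | ∃ x : ∀ n, X n, uMk u x = z ∧ ∀ᶠ n in (u : Filter ℕ), x n ∈ A n}

/-- The limit of a sequence of extended nonnegative reals along the ultrafilter `u`
(it always exists since `ℝ≥0∞` is a compact Hausdorff space). -/
noncomputable def ulim (u : Ultrafilter ℕ) (f : ℕ → ℝ≥0∞) : ℝ≥0∞ :=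
  (u.map f).lim

/-- The Loeb outer measure `θ` on the ultraproduct: the infimum, over countable
covers of `A` by sets of the form `[B^i_n]_u` with all `B^i_n` measurable, of
`∑ᵢ lim_u μ_n (B^i_n)`. -/
noncomputable def loebOuter (u : Ultrafilter ℕ) {X : ℕ → Type*}
    [∀ n, MeasurableSpace (X n)] (μ : ∀ n, Measure (X n)) (A : Set (UProd u X)) : ℝ≥0∞ :=
  ⨅ (B : ℕ → ∀ n, Set (X n)) (_ : (∀ i n, MeasurableSet (B i n)) ∧
      A ⊆ ⋃ i, uSet u (B i)), ∑' i, ulim u fun n => μ n (B i n)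

/-- Carathéodory measurability with respect to the Loeb outer measure. -/
def LoebMeasurable (u : Ultrafilter ℕ) {X : ℕ → Type*}
    [∀ n, MeasurableSpace (X n)] (μ : ∀ n, Measure (X n)) (A : Set (UProd u X)) : Prop :=
  ∀ S : Set (UProd u X), loebOuter u μ (S ∩ A) + loebOuter u μ (S \ A) ≤ loebOuter u μ S

/-- The map on the ultraproduct induced by a sequence of maps `g n : X n → X n`. -/
def uMap (u : Ultrafilter ℕ) {X : ℕ → Type*} (g : ∀ n, X n → X n) :
    UProd u X → UProd u X :=
  Quot.lift (fun x => uMk u fun n => g n (x n))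
    (fun x y h => Quot.sound (h.mono fun n hn => by simpa using congrArg (g n) hn))

section Base
variable {u : Ultrafilter ℕ} {X : ℕ → Type*}

theorem uRel_of_eqvGen {x y : ∀ n, X n} (h : Relation.EqvGen (uRel u) x y) : uRel u x y := by
  induction h with
  | rel _ _ h => exact h
  | refl _ => exact Eventually.of_forall fun _ => rfl
  | symm _ _ _ ih => exact ih.mono fun n hn => hn.symm
  | trans _ _ _ _ _ ih₁ ih₂ => exact (ih₁.and ih₂).mono fun n hn => hn.1.trans hn.2

theorem uMk_eq_iff {x y : ∀ n, X n} : uMk u x = uMk u y ↔ uRel u x y :=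
  ⟨fun h => uRel_of_eqvGen (Quot.eqvGen_exact h), fun h => Quot.sound h⟩

theorem mem_uSet_iff {A : ∀ n, Set (X n)} {x : ∀ n, X n} :
    uMk u x ∈ uSet u A ↔ ∀ᶠ n in (u : Filter ℕ), x n ∈ A n := by
  constructor
  · rintro ⟨y, hxy, hy⟩
    have := uMk_eq_iff.mp hxy
    exact (this.and hy).mono fun n hn => hn.1 ▸ hn.2
  · exact fun h => ⟨x, rfl, h⟩

theorem uSet_mono {A B : ∀ n, Set (X n)} (h : ∀ n, A n ⊆ B n) : uSet u A ⊆ uSet u B := by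
  rintro z ⟨x, rfl, hx⟩
  exact ⟨x, rfl, hx.mono fun n hn => h n hn⟩

theorem tendsto_ulim (f : ℕ → ℝ≥0∞) : Tendsto f (u : Filter ℕ) (𝓝 (ulim u f)) := by
  have := (u.map f).le_nhds_lim
  rwa [Ultrafilter.coe_map] at this

theorem ulim_eq {f : ℕ → ℝ≥0∞} {a : ℝ≥0∞} (h : Tendsto f (u : Filter ℕ) (𝓝 a)) :
    ulim u f = a :=
  tendsto_nhds_unique (tendsto_ulim f) h

theorem ulim_const {a : ℝ≥0∞} : ulim u (fun _ => a) = a := ulim_eq tendsto_const_nhds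

theorem ulim_congr {f g : ℕ → ℝ≥0∞} (h : ∀ᶠ n in (u : Filter ℕ), f n = g n) :
    ulim u f = ulim u g :=
  ulim_eq ((tendsto_ulim g).congr' (h.mono fun _ hn => hn.symm))

theorem ulim_mono {f g : ℕ → ℝ≥0∞} (h : ∀ᶠ n in (u : Filter ℕ), f n ≤ g n) :
    ulim u f ≤ ulim u g :=
  le_of_tendsto_of_tendsto (tendsto_ulim f) (tendsto_ulim g) h

theorem ulim_add (f g : ℕ → ℝ≥0∞) :
    ulim u (fun n => f n + g n) = ulim u f + ulim u g :=
  ulim_eq ((tendsto_ulim f).add (tendsto_ulim g))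

theorem ulim_finset_sum {ι : Type*} (s : Finset ι) (f : ι → ℕ → ℝ≥0∞) :
    ulim u (fun n => ∑ i ∈ s, f i n) = ∑ i ∈ s, ulim u (f i) :=
  ulim_eq (tendsto_finset_sum s fun i _ => tendsto_ulim (f i))

theorem ulim_le {f : ℕ → ℝ≥0∞} {a : ℝ≥0∞} (h : ∀ᶠ n in (u : Filter ℕ), f n ≤ a) :
    ulim u f ≤ a := by
  simpa [ulim_const] using ulim_mono (u := u) (g := fun _ => a) h

theorem le_ulim {f : ℕ → ℝ≥0∞} {a : ℝ≥0∞} (h : ∀ᶠ n in (u : Filter ℕ), a ≤ f n) :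
    a ≤ ulim u f := by
  simpa [ulim_const] using ulim_mono (u := u) (f := fun _ => a) h

theorem eventually_lt_of_ulim_lt {f : ℕ → ℝ≥0∞} {a : ℝ≥0∞} (h : ulim u f < a) :
    ∀ᶠ n in (u : Filter ℕ), f n < a :=
  (tendsto_ulim f).eventually_lt_const h

end Base

section Sat
variable {u : Ultrafilter ℕ} {X : ℕ → Type*}

open Classical in
/-- ℵ₁-saturation: a decreasing sequence of nonempty internal sets has a common point. -/
theorem saturation (hu : (u : Filter ℕ) ≤ Filter.cofinite) {C : ℕ → ∀ n, Set (X n)}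
    (hmono : ∀ k l, k ≤ l → ∀ n, C l n ⊆ C k n)
    (hne : ∀ k, (uSet u (C k)).Nonempty) :
    ∃ x : ∀ n, X n, ∀ k, ∀ᶠ n in (u : Filter ℕ), x n ∈ C k n := by
  have hx : ∀ k, ∃ x : ∀ n, X n, ∀ᶠ n in (u : Filter ℕ), x n ∈ C k n := by
    intro k
    obtain ⟨z, x, rfl, hxk⟩ := hne k
    exact ⟨x, hxk⟩
  choose y hy using hx
  have hS : ∀ k, ∀ᶠ n in (u : Filter ℕ), (C k n).Nonempty :=
    fun k => (hy k).mono fun n hn => ⟨_, hn⟩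
  set m : ℕ → ℕ := fun n => Nat.findGreatest (fun k => (C k n).Nonempty) n with hm
  refine ⟨fun n => if h : (C (m n) n).Nonempty then h.choose else y 0 n, fun k => ?_⟩
  have hk : ∀ᶠ n in (u : Filter ℕ), k ≤ n := hu (Filter.eventually_cofinite.2 (by
    simpa using Set.finite_Iio k |>.subset (fun n hn => by
      simp only [Set.mem_setOf_eq, not_le] at hn ⊢; exact hn)))
  filter_upwards [hS k, hk] with n hCn hkn
  have hkm : k ≤ m n := Nat.le_findGreatest (P := fun k => (C k n).Nonempty) hkn hCn
  have hPm : (C (m n) n).Nonempty := Nat.findGreatest_spec (P := fun k => (C k n).Nonempty) hkn hCn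
  simp only [hPm, dif_pos]
  exact hmono k (m n) hkm n hPm.choose_spec

end Sat
section Outer
variable {u : Ultrafilter ℕ} {X : ℕ → Type*} [∀ n, MeasurableSpace (X n)]
  {μ : ∀ n, Measure (X n)}

theorem loebOuter_le_sum {A : Set (UProd u X)} {B : ℕ → ∀ n, Set (X n)}
    (hB : ∀ i n, MeasurableSet (B i n)) (hcov : A ⊆ ⋃ i, uSet u (B i)) :
    loebOuter u μ A ≤ ∑' i, ulim u fun n => μ n (B i n) :=
  iInf_le_of_le B (iInf_le _ ⟨hB, hcov⟩)

theorem loebOuter_mono {A A' : Set (UProd u X)} (h : A ⊆ A') :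
    loebOuter u μ A ≤ loebOuter u μ A' :=
  le_iInf₂ fun B hB => loebOuter_le_sum hB.1 (h.trans hB.2)

theorem exists_cover_lt {A : Set (UProd u X)} {t : ℝ≥0∞} (h : loebOuter u μ A < t) :
    ∃ B : ℕ → ∀ n, Set (X n), (∀ i n, MeasurableSet (B i n)) ∧ (A ⊆ ⋃ i, uSet u (B i)) ∧
      (∑' i, ulim u fun n => μ n (B i n)) < t := by
  simp only [loebOuter, iInf_lt_iff] at h
  obtain ⟨B, hB, hlt⟩ := h
  exact ⟨B, hB.1, hB.2, hlt⟩

theorem loebOuter_uSet_le {A : ∀ n, Set (X n)} (hA : ∀ n, MeasurableSet (A n)) :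
    loebOuter u μ (uSet u A) ≤ ulim u fun n => μ n (A n) := by
  have h := loebOuter_le_sum (u := u) (μ := μ) (A := uSet u A)
      (B := fun i => if i = 0 then A else fun _ => ∅)
      (fun i n => by by_cases h : i = 0 <;> simp [h, hA n])
      (by
        refine Set.subset_iUnion_of_subset 0 ?_
        simp)
  refine h.trans_eq ?_
  rw [tsum_eq_single 0]
  · simp
  · intro i hi
    simp only [if_neg hi]
    simpa using ulim_const (u := u) (a := 0)

variable [∀ n, IsProbabilityMeasure (μ n)]

theorem nonempty_of_prob (μ : ∀ n, Measure (X n)) [∀ n, IsProbabilityMeasure (μ n)]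
    (n : ℕ) : Nonempty (X n) := by
  by_contra h
  have h1 : μ n Set.univ = 1 := measure_univ
  rw [Set.univ_eq_empty_iff.2 (not_nonempty_iff.1 h), measure_empty] at h1
  exact zero_ne_one h1

theorem subset_uSet_univ (A : Set (UProd u X)) : A ⊆ uSet u (fun _ => Set.univ) := by
  intro z _
  induction z using Quot.ind with
  | _ x => exact mem_uSet_iff.2 (Filter.Eventually.of_forall fun n => Set.mem_univ _)

theorem loebOuter_le_one (A : Set (UProd u X)) : loebOuter u μ A ≤ 1 := by
  refine (loebOuter_mono (subset_uSet_univ A)).trans ?_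
  refine (loebOuter_uSet_le fun n => MeasurableSet.univ).trans ?_
  refine ulim_le (Filter.Eventually.of_forall fun n => ?_)
  simp

theorem loebOuter_ne_top (A : Set (UProd u X)) : loebOuter u μ A ≠ ∞ :=
  ((loebOuter_le_one A).trans_lt ENNReal.one_lt_top).ne

/-- Key saturation consequence: the ultralimit measure of an internal set is dominated by
the weight of any countable internal cover. -/
theorem ulim_le_cover (hu : (u : Filter ℕ) ≤ Filter.cofinite)
    {A : ∀ n, Set (X n)} {B : ℕ → ∀ n, Set (X n)}
    (hcov : uSet u A ⊆ ⋃ i, uSet u (B i)) :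
    (ulim u fun n => μ n (A n)) ≤ ∑' i, ulim u fun n => μ n (B i n) := by
  haveI : ∀ n, Nonempty (X n) := nonempty_of_prob μ
  set C : ℕ → ∀ n, Set (X n) := fun k n => A n \ ⋃ i ∈ Finset.range k, B i n with hC
  have hmono : ∀ k l, k ≤ l → ∀ n, C l n ⊆ C k n := by
    intro k l hkl n y hy
    refine ⟨hy.1, fun hmem => hy.2 ?_⟩
    simp only [Set.mem_iUnion] at hmem ⊢
    obtain ⟨i, hik, hi⟩ := hmem
    exact ⟨i, by simp only [Finset.mem_range] at hik ⊢; omega, hi⟩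
  by_cases hne : ∀ k, (uSet u (C k)).Nonempty
  · exfalso
    obtain ⟨x, hx⟩ := saturation hu hmono hne
    have hxA : uMk u x ∈ uSet u A := mem_uSet_iff.2 ((hx 0).mono fun n hn => hn.1)
    obtain ⟨i, hi⟩ := Set.mem_iUnion.1 (hcov hxA)
    have hxB : ∀ᶠ n in (u : Filter ℕ), x n ∈ B i n := mem_uSet_iff.1 hi
    have hxC : ∀ᶠ n in (u : Filter ℕ), x n ∉ B i n :=
      (hx (i + 1)).mono fun n hn hmem => hn.2 (by
        simp only [Set.mem_iUnion]
        exact ⟨i, Finset.mem_range.2 (Nat.lt_succ_self i), hmem⟩)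
    obtain ⟨n, h1, h2⟩ := (hxB.and hxC).exists
    exact h2 h1
  · push_neg at hne
    obtain ⟨k, hk⟩ := hne
    have hCke : ∀ᶠ n in (u : Filter ℕ), C k n = ∅ := by
      rw [Filter.Eventually, Ultrafilter.mem_coe]
      by_contra h
      rw [← Ultrafilter.compl_mem_iff_notMem] at h
      classical
      have : uMk u (fun n => if hn : (C k n).Nonempty then hn.choose else
          Classical.arbitrary (X n)) ∈ uSet u (C k) := by
        refine mem_uSet_iff.2 ?_
        refine Filter.mem_of_superset h fun n hn => ?_
        simp only [Set.mem_compl_iff, Set.mem_setOf_eq] at hn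
        have hnn : (C k n).Nonempty := Set.nonempty_iff_ne_empty.2 hn
        simp only [Set.mem_setOf_eq]
        rw [dif_pos hnn]
        exact hnn.choose_spec
      rw [hk] at this
      exact this
    have step1 : (ulim u fun n => μ n (A n)) ≤
        ulim u fun n => μ n (C k n) + ∑ i ∈ Finset.range k, μ n (B i n) := by
      refine ulim_mono (Filter.Eventually.of_forall fun n => ?_)
      calc μ n (A n) ≤ μ n (C k n ∪ ⋃ i ∈ Finset.range k, B i n) := by
            refine measure_mono fun y hy => ?_
            by_cases hmem : y ∈ ⋃ i ∈ Finset.range k, B i n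
            · exact Or.inr hmem
            · exact Or.inl ⟨hy, hmem⟩
        _ ≤ μ n (C k n) + μ n (⋃ i ∈ Finset.range k, B i n) := measure_union_le _ _
        _ ≤ μ n (C k n) + ∑ i ∈ Finset.range k, μ n (B i n) := by
            gcongr
            exact measure_biUnion_finset_le _ _
    have step2 : (ulim u fun n => μ n (C k n) + ∑ i ∈ Finset.range k, μ n (B i n))
        = ∑ i ∈ Finset.range k, ulim u fun n => μ n (B i n) := by
      rw [ulim_add, ulim_finset_sum]
      have : (ulim u fun n => μ n (C k n)) = 0 := by
        rw [ulim_congr (hCke.mono fun n hn => by rw [hn, measure_empty])]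
        exact ulim_const
      rw [this, zero_add]
    exact (step1.trans_eq step2).trans (ENNReal.sum_le_tsum _)

theorem loebOuter_uSet (hu : (u : Filter ℕ) ≤ Filter.cofinite)
    {A : ∀ n, Set (X n)} (hA : ∀ n, MeasurableSet (A n)) :
    loebOuter u μ (uSet u A) = ulim u fun n => μ n (A n) :=
  le_antisymm (loebOuter_uSet_le hA) (le_iInf₂ fun _ hB => ulim_le_cover hu hB.2)

end Outer
section Outer2
variable {u : Ultrafilter ℕ} {X : ℕ → Type*} [∀ n, MeasurableSpace (X n)]
  {μ : ∀ n, Measure (X n)} [∀ n, IsProbabilityMeasure (μ n)]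

theorem loebOuter_union_le (A B : Set (UProd u X)) :
    loebOuter u μ (A ∪ B) ≤ loebOuter u μ A + loebOuter u μ B := by
  refine ENNReal.le_of_forall_pos_le_add fun ε hε _ => ?_
  have hε2 : (ε : ℝ≥0∞) / 2 ≠ 0 := by
    simp [ENNReal.div_eq_zero_iff, ENNReal.coe_ne_zero, hε.ne']
  obtain ⟨C, hCm, hCc, hCs⟩ := exists_cover_lt (μ := μ) (A := A)
    (ENNReal.lt_add_right (loebOuter_ne_top A) hε2)
  obtain ⟨D, hDm, hDc, hDs⟩ := exists_cover_lt (μ := μ) (A := B)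
    (ENNReal.lt_add_right (loebOuter_ne_top B) hε2)
  classical
  set E : ℕ → ∀ n, Set (X n) := fun i => if Even i then C (i / 2) else D (i / 2) with hE
  have hCeq : ∀ i, E (2 * i) = C i := fun i => by
    simp only [hE]; rw [if_pos ⟨i, two_mul i⟩, Nat.mul_div_cancel_left i two_pos]
  have hDeq : ∀ i, E (2 * i + 1) = D i := fun i => by
    simp only [hE]
    rw [if_neg (by simp [Nat.even_add_one, Nat.even_mul])]
    have h2 : (2 * i + 1) / 2 = i := by omega
    rw [h2]
  have hEm : ∀ i n, MeasurableSet (E i n) := by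
    intro i n
    by_cases h : Even i <;> simp [hE, h, hCm, hDm]
  have hEc : A ∪ B ⊆ ⋃ i, uSet u (E i) := by
    rintro z (hz | hz)
    · obtain ⟨i, hi⟩ := Set.mem_iUnion.1 (hCc hz)
      refine Set.mem_iUnion.2 ⟨2 * i, ?_⟩
      rwa [hCeq i]
    · obtain ⟨i, hi⟩ := Set.mem_iUnion.1 (hDc hz)
      refine Set.mem_iUnion.2 ⟨2 * i + 1, ?_⟩
      rwa [hDeq i]
  refine (loebOuter_le_sum hEm hEc).trans ?_
  have hsplit : (∑' i, ulim u fun n => μ n (E i n)) =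
      (∑' i, ulim u fun n => μ n (C i n)) + ∑' i, ulim u fun n => μ n (D i n) := by
    rw [← tsum_even_add_odd ENNReal.summable ENNReal.summable]
    congr 1
    · exact tsum_congr fun i => by rw [hCeq i]
    · exact tsum_congr fun i => by rw [hDeq i]
  rw [hsplit]
  calc _ ≤ (loebOuter u μ A + ε / 2) + (loebOuter u μ B + ε / 2) :=
        add_le_add hCs.le hDs.le
    _ = loebOuter u μ A + loebOuter u μ B + (ε / 2 + ε / 2) := by ring
    _ = loebOuter u μ A + loebOuter u μ B + ε := by rw [ENNReal.add_halves]

theorem loebMeasurable_uSet_of_measurable {A : ∀ n, Set (X n)}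
    (hA : ∀ n, MeasurableSet (A n)) : LoebMeasurable u μ (uSet u A) := by
  intro S
  refine le_iInf₂ fun B hB => ?_
  obtain ⟨hBm, hBc⟩ := hB
  have h1 : loebOuter u μ (S ∩ uSet u A) ≤ ∑' i, ulim u fun n => μ n (B i n ∩ A n) := by
    refine loebOuter_le_sum (fun i n => (hBm i n).inter (hA n)) ?_
    rintro z ⟨hzS, hzA⟩
    obtain ⟨i, hi⟩ := Set.mem_iUnion.1 (hBc hzS)
    refine Set.mem_iUnion.2 ⟨i, ?_⟩
    induction z using Quot.ind with
    | _ x =>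
      exact mem_uSet_iff.2
        (((mem_uSet_iff.1 hi).and (mem_uSet_iff.1 hzA)).mono fun n hn => ⟨hn.1, hn.2⟩)
  have h2 : loebOuter u μ (S \ uSet u A) ≤ ∑' i, ulim u fun n => μ n (B i n \ A n) := by
    refine loebOuter_le_sum (fun i n => (hBm i n).diff (hA n)) ?_
    rintro z ⟨hzS, hzA⟩
    obtain ⟨i, hi⟩ := Set.mem_iUnion.1 (hBc hzS)
    refine Set.mem_iUnion.2 ⟨i, ?_⟩
    induction z using Quot.ind with
    | _ x =>
      have hnotA : ∀ᶠ n in (u : Filter ℕ), x n ∉ A n :=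
        Ultrafilter.eventually_not.2 fun h => hzA (mem_uSet_iff.2 h)
      exact mem_uSet_iff.2
        (((mem_uSet_iff.1 hi).and hnotA).mono fun n hn => ⟨hn.1, hn.2⟩)
  calc loebOuter u μ (S ∩ uSet u A) + loebOuter u μ (S \ uSet u A)
      ≤ (∑' i, ulim u fun n => μ n (B i n ∩ A n)) +
        ∑' i, ulim u fun n => μ n (B i n \ A n) := add_le_add h1 h2
    _ = ∑' i, ((ulim u fun n => μ n (B i n ∩ A n)) + ulim u fun n => μ n (B i n \ A n)) :=
        (ENNReal.tsum_add).symm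
    _ = ∑' i, ulim u fun n => μ n (B i n) := by
        refine tsum_congr fun i => ?_
        rw [← ulim_add]
        exact ulim_congr (Filter.Eventually.of_forall fun n =>
          measure_inter_add_diff (B i n) (hA n))

/-- `uSet` commutes with symmetric differences. -/
theorem uSet_symmDiff (A B : ∀ n, Set (X n)) :
    uSet u (fun n => A n ∆ B n) = uSet u A ∆ uSet u B := by
  ext z
  induction z using Quot.ind with
  | _ x =>
    show uMk u x ∈ _ ↔ uMk u x ∈ _
    rw [Set.mem_symmDiff]
    constructor
    · intro h
      have hx := mem_uSet_iff.1 h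
      have : (∀ᶠ n in (u : Filter ℕ), x n ∈ A n ∧ x n ∉ B n) ∨
          ∀ᶠ n in (u : Filter ℕ), x n ∈ B n ∧ x n ∉ A n := by
        rw [← Ultrafilter.eventually_or]
        exact hx.mono fun n hn => by simpa [Set.mem_symmDiff] using hn
      rcases this with h' | h'
      · refine Or.inl ⟨mem_uSet_iff.2 (h'.mono fun n hn => hn.1), fun hB => ?_⟩
        obtain ⟨n, hn1, hn2⟩ := (h'.and (mem_uSet_iff.1 hB)).exists
        exact hn1.2 hn2
      · refine Or.inr ⟨mem_uSet_iff.2 (h'.mono fun n hn => hn.1), fun hA => ?_⟩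
        obtain ⟨n, hn1, hn2⟩ := (h'.and (mem_uSet_iff.1 hA)).exists
        exact hn1.2 hn2
    · rintro (⟨hA, hB⟩ | ⟨hB, hA⟩)
      · have hA' := mem_uSet_iff.1 hA
        have hB' : ∀ᶠ n in (u : Filter ℕ), x n ∉ B n :=
          Ultrafilter.eventually_not.2 fun h => hB (mem_uSet_iff.2 h)
        exact mem_uSet_iff.2 ((hA'.and hB').mono fun n hn =>
          Set.mem_symmDiff.2 (Or.inl ⟨hn.1, hn.2⟩))
      · have hB' := mem_uSet_iff.1 hB
        have hA' : ∀ᶠ n in (u : Filter ℕ), x n ∉ A n :=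
          Ultrafilter.eventually_not.2 fun h => hA (mem_uSet_iff.2 h)
        exact mem_uSet_iff.2 ((hB'.and hA').mono fun n hn =>
          Set.mem_symmDiff.2 (Or.inr ⟨hn.1, hn.2⟩))

end Outer2
section Approx
variable {u : Ultrafilter ℕ} {X : ℕ → Type*} [∀ n, MeasurableSpace (X n)]
  {μ : ∀ n, Measure (X n)} [∀ n, IsProbabilityMeasure (μ n)]

/-- Approximation of a Carathéodory measurable set by an internal set, up to `ε`. -/
theorem exists_internal_approx (hu : (u : Filter ℕ) ≤ Filter.cofinite)
    {S : Set (UProd u X)} (hS : LoebMeasurable u μ S) {ε : ℝ≥0∞} (hε : 0 < ε) :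
    ∃ D : ∀ n, Set (X n), (∀ n, MeasurableSet (D n)) ∧ loebOuter u μ (S ∆ uSet u D) ≤ ε := by
  by_cases hε1 : 1 ≤ ε
  · exact ⟨fun _ => ∅, fun n => MeasurableSet.empty,
      (loebOuter_le_one _).trans hε1⟩
  push_neg at hε1
  have hεtop : ε ≠ ∞ := (hε1.trans ENNReal.one_lt_top).ne
  set δ : ℝ≥0∞ := ε / 2 / 2 with hδ
  have hδ2 : δ + δ = ε / 2 := ENNReal.add_halves _
  have hε4 : δ ≠ 0 := by
    simp only [hδ, ne_eq, ENNReal.div_eq_zero_iff]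
    push_neg
    refine ⟨⟨hε.ne', by norm_num⟩, by norm_num⟩
  have hδtop : δ < ∞ := ENNReal.div_lt_top (ENNReal.div_lt_top hεtop (by norm_num)).ne
    (by norm_num)
  -- choose a good cover of S
  obtain ⟨B, hBm, hBc, hBs⟩ := exists_cover_lt (μ := μ) (A := S)
    (ENNReal.lt_add_right (loebOuter_ne_top S) hε4)
  set g : ℕ → ℝ≥0∞ := fun i => ulim u fun n => μ n (B i n) with hg
  have hgt : (∑' i, g i) ≠ ∞ := by
    refine (hBs.trans ?_).ne
    exact ENNReal.add_lt_top.2 ⟨(loebOuter_le_one S).trans_lt ENNReal.one_lt_top, hδtop⟩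
  -- choose a cut-off point with small tail
  have htail : Filter.Tendsto (fun k => ∑' i, g (i + k)) Filter.atTop (𝓝 0) :=
    ENNReal.tendsto_sum_nat_add g hgt
  obtain ⟨k, hk⟩ := (htail.eventually_lt_const (pos_iff_ne_zero.2 hε4)).exists
  classical
  set D : ∀ n, Set (X n) := fun n => ⋃ i ∈ Finset.range k, B i n with hD
  have hDm : ∀ n, MeasurableSet (D n) := fun n =>
    (Finset.range k).measurableSet_biUnion fun i _ => hBm i n
  set F : Set (UProd u X) := uSet u D with hF
  have hsub : ∀ i, i < k → uSet u (B i) ⊆ F := fun i hik =>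
    uSet_mono fun n y hy => Set.mem_biUnion (Finset.mem_range.2 hik) hy
  -- (ii) the part of S outside F is small
  have hSdiffF : loebOuter u μ (S \ F) ≤ δ := by
    have : S \ F ⊆ ⋃ i, uSet u (B (i + k)) := by
      rintro z ⟨hzS, hzF⟩
      obtain ⟨i, hi⟩ := Set.mem_iUnion.1 (hBc hzS)
      rcases lt_or_ge i k with h | h
      · exact absurd (hsub i h hi) hzF
      · refine Set.mem_iUnion.2 ⟨i - k, ?_⟩
        rwa [Nat.sub_add_cancel h]
    exact (loebOuter_le_sum (fun i n => hBm _ n) this).trans hk.le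
  -- (iii) F has outer measure at most θ S + ε/4
  have hFle : loebOuter u μ F ≤ loebOuter u μ S + δ := by
    have h1 : loebOuter u μ F ≤ ulim u fun n => μ n (D n) := loebOuter_uSet_le hDm
    have h2 : (ulim u fun n => μ n (D n)) ≤ ∑ i ∈ Finset.range k, g i := by
      have := ulim_mono (u := u) (f := fun n => μ n (D n))
        (g := fun n => ∑ i ∈ Finset.range k, μ n (B i n))
        (Filter.Eventually.of_forall fun n => measure_biUnion_finset_le _ _)
      rwa [ulim_finset_sum] at this
    exact (h1.trans h2).trans ((ENNReal.sum_le_tsum _).trans hBs.le)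
  -- (iv) θ S ≤ θ (S ∩ F) + ε/4
  have hSle : loebOuter u μ S ≤ loebOuter u μ (S ∩ F) + δ := by
    have : S ⊆ (S ∩ F) ∪ (S \ F) := fun z hz => by
      by_cases h : z ∈ F
      · exact Or.inl ⟨hz, h⟩
      · exact Or.inr ⟨hz, h⟩
    calc loebOuter u μ S ≤ loebOuter u μ ((S ∩ F) ∪ (S \ F)) := loebOuter_mono this
      _ ≤ loebOuter u μ (S ∩ F) + loebOuter u μ (S \ F) := loebOuter_union_le _ _
      _ ≤ loebOuter u μ (S ∩ F) + δ := by gcongr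
  -- (v) the part of F outside S is small
  have hFdiffS : loebOuter u μ (F \ S) ≤ ε / 2 := by
    have hcara := hS F
    rw [Set.inter_comm F S] at hcara
    have : loebOuter u μ (S ∩ F) + loebOuter u μ (F \ S) ≤
        loebOuter u μ (S ∩ F) + (δ + δ) := by
      calc loebOuter u μ (S ∩ F) + loebOuter u μ (F \ S) ≤ loebOuter u μ F := hcara
        _ ≤ loebOuter u μ S + δ := hFle
        _ ≤ (loebOuter u μ (S ∩ F) + δ) + δ := by gcongr
        _ = loebOuter u μ (S ∩ F) + (δ + δ) := by ring
    have hfin : loebOuter u μ (S ∩ F) ≠ ∞ := loebOuter_ne_top _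
    have := (ENNReal.add_le_add_iff_left hfin).1 this
    calc loebOuter u μ (F \ S) ≤ δ + δ := this
      _ = ε / 2 := hδ2
  refine ⟨D, hDm, ?_⟩
  calc loebOuter u μ (S ∆ F) = loebOuter u μ ((S \ F) ∪ (F \ S)) := by
        rw [Set.symmDiff_def]
    _ ≤ loebOuter u μ (S \ F) + loebOuter u μ (F \ S) := loebOuter_union_le _ _
    _ ≤ δ + ε / 2 := add_le_add hSdiffF hFdiffS
    _ ≤ ε / 2 + ε / 2 := add_le_add ENNReal.half_le_self le_rfl
    _ = ε := ENNReal.add_halves ε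

end Approx
section Final
variable {u : Ultrafilter ℕ} {X : ℕ → Type*} [∀ n, MeasurableSpace (X n)]
  {μ : ∀ n, Measure (X n)} [∀ n, IsProbabilityMeasure (μ n)]

/-- The geometric sequence `2⁻ᵐ`. -/
noncomputable def geo (m : ℕ) : ℝ≥0∞ := (2 : ℝ≥0∞)⁻¹ ^ m

theorem geo_ne_zero (m : ℕ) : geo m ≠ 0 :=
  pow_ne_zero m (ENNReal.inv_ne_zero.2 (by norm_num))

theorem geo_ne_top (m : ℕ) : geo m ≠ ∞ :=
  ENNReal.pow_ne_top (ENNReal.inv_ne_top.2 (by norm_num))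

theorem geo_succ_add (m : ℕ) : geo (m + 1) + geo (m + 1) = geo m := by
  rw [geo, geo, pow_succ, ← mul_add]
  have h2 : (2 : ℝ≥0∞)⁻¹ + 2⁻¹ = 1 := by
    rw [← one_div]
    exact ENNReal.add_halves 1
  rw [h2, mul_one]

theorem geo_tendsto_zero : Filter.Tendsto geo Filter.atTop (𝓝 0) :=
  ENNReal.tendsto_pow_atTop_nhds_zero_of_lt_one (by norm_num)

theorem geo_sum_le (m : ℕ) : ∀ M, m ≤ M →
    (∑ j ∈ Finset.Ico m M, geo j) + 2 * geo M ≤ 2 * geo m := by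
  refine Nat.le_induction ?_ ?_
  · simp
  · intro M hmM ih
    rw [Finset.sum_Ico_succ_top hmM]
    have h1 : 2 * geo (M + 1) = geo M := by rw [two_mul, geo_succ_add]
    calc (∑ j ∈ Finset.Ico m M, geo j) + geo M + 2 * geo (M + 1)
        = (∑ j ∈ Finset.Ico m M, geo j) + (geo M + geo M) := by rw [h1]; ring
      _ = (∑ j ∈ Finset.Ico m M, geo j) + 2 * geo M := by rw [two_mul]
      _ ≤ 2 * geo m := ih

theorem symmDiff_chain {α : Type*} [MeasurableSpace α] (ν : Measure α) (D : ℕ → Set α)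
    (m : ℕ) : ∀ M, m ≤ M → (∀ j, m ≤ j → j < M → ν (D j ∆ D (j + 1)) ≤ 4 * geo j) →
    ν (D m ∆ D M) ≤ ∑ j ∈ Finset.Ico m M, 4 * geo j := by
  refine Nat.le_induction ?_ ?_
  · intro _
    simp [symmDiff_self]
  · intro M hmM ih hbound
    rw [Finset.sum_Ico_succ_top hmM]
    calc ν (D m ∆ D (M + 1)) ≤ ν (D m ∆ D M) + ν (D M ∆ D (M + 1)) :=
          measure_symmDiff_le _ _ _
      _ ≤ (∑ j ∈ Finset.Ico m M, 4 * geo j) + 4 * geo M := by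
          gcongr
          · exact ih fun j h1 h2 => hbound j h1 (by omega)
          · exact hbound M hmM (by omega)

open Classical in
theorem exists_internal_null_symmDiff (hu : (u : Filter ℕ) ≤ Filter.cofinite)
    {S : Set (UProd u X)} (hS : LoebMeasurable u μ S) :
    ∃ B : ∀ n, Set (X n), (∀ n, MeasurableSet (B n)) ∧
      loebOuter u μ (S ∆ uSet u B) = 0 := by
  have happrox : ∀ m : ℕ, ∃ D : ∀ n, Set (X n), (∀ n, MeasurableSet (D n)) ∧
      loebOuter u μ (S ∆ uSet u D) ≤ geo m := fun m =>
    exists_internal_approx hu hS (pos_iff_ne_zero.2 (geo_ne_zero m))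
  choose D hDm hDe using happrox
  -- consecutive internal sets are close
  have hclose : ∀ m, (ulim u fun n => μ n (D m n ∆ D (m + 1) n)) < 4 * geo m := by
    intro m
    have heq : (ulim u fun n => μ n (D m n ∆ D (m + 1) n)) =
        loebOuter u μ (uSet u (D m) ∆ uSet u (D (m + 1))) := by
      rw [← uSet_symmDiff, loebOuter_uSet hu fun n => (hDm m n).symmDiff (hDm (m + 1) n)]
    have hsub : uSet u (D m) ∆ uSet u (D (m + 1)) ⊆
        (S ∆ uSet u (D m)) ∪ (S ∆ uSet u (D (m + 1))) := by
      have := symmDiff_triangle (uSet u (D m)) S (uSet u (D (m + 1)))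
      intro z hz
      rcases this hz with h | h
      · exact Or.inl (symmDiff_comm S (uSet u (D m)) ▸ h)
      · exact Or.inr h
    have hle : (ulim u fun n => μ n (D m n ∆ D (m + 1) n)) ≤ 2 * geo m := by
      rw [heq]
      calc loebOuter u μ (uSet u (D m) ∆ uSet u (D (m + 1)))
          ≤ loebOuter u μ ((S ∆ uSet u (D m)) ∪ (S ∆ uSet u (D (m + 1)))) :=
            loebOuter_mono hsub
        _ ≤ loebOuter u μ (S ∆ uSet u (D m)) + loebOuter u μ (S ∆ uSet u (D (m + 1))) :=
            loebOuter_union_le _ _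
        _ ≤ geo m + geo (m + 1) := add_le_add (hDe m) (hDe (m + 1))
        _ ≤ geo m + geo m := by
            gcongr
            rw [← geo_succ_add m]
            exact le_self_add
        _ = 2 * geo m := (two_mul _).symm
    refine hle.trans_lt ?_
    rw [mul_comm 2, mul_comm 4]; refine ENNReal.mul_lt_mul_right (geo_ne_zero m) (geo_ne_top m) ?_
    norm_num
  -- the good index sets
  set V : ℕ → Set ℕ := fun m => {n | μ n (D m n ∆ D (m + 1) n) < 4 * geo m} with hV
  have hVu : ∀ m, ∀ᶠ n in (u : Filter ℕ), n ∈ V m := fun m =>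
    eventually_lt_of_ulim_lt (hclose m)
  set P : ℕ → ℕ → Prop := fun n m => ∀ j, j < m → n ∈ V j with hP
  set mfun : ℕ → ℕ := fun n => Nat.findGreatest (P n) n with hmfun
  refine ⟨fun n => D (mfun n) n, fun n => hDm _ n, ?_⟩
  set B : ∀ n, Set (X n) := fun n => D (mfun n) n with hB
  -- the diagonal set is close to every `D m`
  have hkey : ∀ m, ∀ᶠ n in (u : Filter ℕ), μ n (D m n ∆ B n) ≤ 8 * geo m := by
    intro m
    have hallV : ∀ᶠ n in (u : Filter ℕ), P n m := by
      induction m with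
      | zero => exact Filter.Eventually.of_forall fun n j hj => absurd hj (Nat.not_lt_zero j)
      | succ m ih =>
        filter_upwards [ih, hVu m] with n h1 h2 j hj
        rcases Nat.lt_succ_iff_lt_or_eq.1 hj with h | h
        · exact h1 j h
        · exact h ▸ h2
    have hge : ∀ᶠ n in (u : Filter ℕ), m ≤ n :=
      hu (Nat.cofinite_eq_atTop ▸ Filter.eventually_ge_atTop m)
    filter_upwards [hallV, hge] with n hPn hmn
    have hmle : m ≤ mfun n := Nat.le_findGreatest hmn hPn
    have hPm : P n (mfun n) := Nat.findGreatest_spec (P := P n) hmn hPn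
    have hchain : μ n (D m n ∆ D (mfun n) n) ≤ ∑ j ∈ Finset.Ico m (mfun n), 4 * geo j :=
      symmDiff_chain (μ n) (fun j => D j n) m (mfun n) hmle
        fun j _ hj => (hPm j hj).le
    calc μ n (D m n ∆ B n) ≤ ∑ j ∈ Finset.Ico m (mfun n), 4 * geo j := hchain
      _ = 4 * ∑ j ∈ Finset.Ico m (mfun n), geo j := by rw [Finset.mul_sum]
      _ ≤ 4 * (2 * geo m) := by
          gcongr
          exact le_self_add.trans (geo_sum_le m (mfun n) hmle)
      _ = 8 * geo m := by ring
  -- conclude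
  have hfinal : ∀ m, loebOuter u μ (S ∆ uSet u B) ≤ 9 * geo m := by
    intro m
    have h1 : loebOuter u μ (uSet u (D m) ∆ uSet u B) ≤ 8 * geo m := by
      rw [← uSet_symmDiff, loebOuter_uSet hu fun n => (hDm m n).symmDiff (hDm _ n)]
      exact ulim_le (hkey m)
    have hsub : S ∆ uSet u B ⊆ (S ∆ uSet u (D m)) ∪ (uSet u (D m) ∆ uSet u B) :=
      symmDiff_triangle S (uSet u (D m)) (uSet u B)
    calc loebOuter u μ (S ∆ uSet u B)
        ≤ loebOuter u μ (S ∆ uSet u (D m)) + loebOuter u μ (uSet u (D m) ∆ uSet u B) :=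
          (loebOuter_mono hsub).trans (loebOuter_union_le _ _)
      _ ≤ geo m + 8 * geo m := add_le_add (hDe m) h1
      _ = 9 * geo m := by ring
  have htends : Filter.Tendsto (fun m => 9 * geo m) Filter.atTop (𝓝 0) := by
    have := ENNReal.Tendsto.const_mul (a := 9) geo_tendsto_zero (Or.inr (by norm_num))
    simpa using this
  have : loebOuter u μ (S ∆ uSet u B) ≤ 0 :=
    le_of_tendsto_of_tendsto tendsto_const_nhds htends
      (Filter.Eventually.of_forall hfinal)
  exact le_antisymm this zero_le

end Final

/-- In the Loeb measure space: (1) every set of the form `[A_n]_u` with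
`A_n` measurable is Carathéodory measurable for `θ` and its Loeb measure is
`lim_u μ_n (A_n)`; (2) every Carathéodory measurable set agrees with some `[B_n]_u`
up to a `θ`-null set. -/
theorem loeb_measurable_sets (u : Ultrafilter ℕ) (hu : (u : Filter ℕ) ≤ Filter.cofinite)
    {X : ℕ → Type*} [∀ n, MeasurableSpace (X n)]
    (μ : ∀ n, Measure (X n)) [∀ n, IsProbabilityMeasure (μ n)] :
    (∀ A : ∀ n, Set (X n), (∀ n, MeasurableSet (A n)) →
      LoebMeasurable u μ (uSet u A) ∧
        loebOuter u μ (uSet u A) = ulim u fun n => μ n (A n)) ∧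
    (∀ S : Set (UProd u X), LoebMeasurable u μ S →
      ∃ B : ∀ n, Set (X n), (∀ n, MeasurableSet (B n)) ∧
        loebOuter u μ (S ∆ uSet u B) = 0) := by
  constructor
  · intro A hA
    exact ⟨loebMeasurable_uSet_of_measurable hA, loebOuter_uSet hu hA⟩
  · intro S hS
    exact exists_internal_null_symmDiff hu hS
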